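/- Let A be a d×d complex matrix that is similar to a permutation matrix, and let m, N be positive integers. If Φ_N(x)^m divides the characteristic polynomial char_A(x), then for every positive integer k dividing N, Φ_k(x)^m also divides char_A(x). -/

import Mathlib

open Matrix Polynomial

section PermCharpoly

open Equiv

set_option linter.unusedSectionVars false

variable {n : Type*} [Fintype n] [DecidableEq n]

private lemma permMatrix_apply' (σ : Equiv.Perm n) (i j : n) :
    σ.permMatrix ℂ i j = if σ i = j then 1 else 0 := by
  simp [Equiv.Perm.permMatrix, PEquiv.toMatrix_apply, Equiv.toPEquiv_apply]

private lemma permMatrix_one' : ((1 : Equiv.Perm n).permMatrix ℂ) = 1 := by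
  ext i j
  simp [permMatrix_apply', Equiv.toPEquiv_apply, Matrix.one_apply]

private lemma permMatrix_mul' (σ τ : Equiv.Perm n) :
    ((σ * τ).permMatrix ℂ) = (τ.permMatrix ℂ) * (σ.permMatrix ℂ) := by
  rw [Equiv.Perm.mul_def]
  simp [Equiv.Perm.permMatrix, ← PEquiv.toMatrix_trans, ← Equiv.toPEquiv_trans]

private lemma permMatrix_pow' (σ : Equiv.Perm n) (k : ℕ) :
    ((σ ^ k).permMatrix ℂ) = (σ.permMatrix ℂ) ^ k := by
  induction k with
  | zero => simpa using (permMatrix_one' (n := n))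
  | succ k ih => rw [pow_succ, permMatrix_mul', ih, ← pow_succ']

private lemma charpoly_one' : (1 : Matrix n n ℂ).charpoly = (X - 1) ^ (Fintype.card n) := by
  have h : charmatrix (1 : Matrix n n ℂ) = diagonal (fun _ => X - 1) := by
    ext i j
    by_cases hij : i = j <;> simp [hij, charmatrix, diagonal, Matrix.one_apply]
  rw [Matrix.charpoly, h, det_diagonal]
  simp

private lemma charpoly_stable (π : Equiv.Perm n) (p : n → Prop) [DecidablePred p]
    [Fintype {x // p x}] [Fintype {x // ¬ p x}]
    (h : ∀ x, p (π x) ↔ p x) :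
    (π.permMatrix ℂ).charpoly =
      ((π.subtypePerm h).permMatrix ℂ).charpoly *
      ((π.subtypePerm (fun x => not_congr (h x)) : Equiv.Perm {x // ¬ p x}).permMatrix ℂ).charpoly := by
  have key : (reindex (Equiv.sumCompl p).symm (Equiv.sumCompl p).symm) (π.permMatrix ℂ)
      = fromBlocks ((π.subtypePerm h).permMatrix ℂ) 0 0
        ((π.subtypePerm (fun x => not_congr (h x)) : Equiv.Perm {x // ¬ p x}).permMatrix ℂ) := by
    ext (i | i) (j | j)
    · simp [permMatrix_apply', Equiv.toPEquiv_apply, fromBlocks, Subtype.ext_iff, Pi.single_apply, eq_comm]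
    · simp only [reindex_apply, submatrix_apply, Equiv.symm_symm, Equiv.sumCompl_apply_inl,
        Equiv.sumCompl_apply_inr, fromBlocks_apply₁₂, permMatrix_apply', Matrix.zero_apply]
      rw [if_neg]
      intro he
      exact j.2 (he ▸ (h i).2 i.2)
    · simp only [reindex_apply, submatrix_apply, Equiv.symm_symm, Equiv.sumCompl_apply_inl,
        Equiv.sumCompl_apply_inr, fromBlocks_apply₂₁, permMatrix_apply', Matrix.zero_apply]
      rw [if_neg]
      intro he
      exact i.2 ((h i).1 (he ▸ j.2))
    · simp [permMatrix_apply', Equiv.toPEquiv_apply, fromBlocks, Subtype.ext_iff, Pi.single_apply, eq_comm]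
  rw [← Matrix.charpoly_reindex (Equiv.sumCompl p).symm (π.permMatrix ℂ), key,
    Matrix.charpoly_fromBlocks_zero₂₁]

private lemma charpoly_transitive {α : Type*} [Fintype α] [DecidableEq α] (π : Equiv.Perm α)
    (x0 : α) (hsurj : ∀ y, ∃ t : ℕ, (π ^ t) x0 = y)
    (hpow : π ^ Fintype.card α = 1) (hc : 0 < Fintype.card α) :
    (π.permMatrix ℂ).charpoly = X ^ Fintype.card α - 1 := by
  set c := Fintype.card α with hcdef
  set P := π.permMatrix ℂ with hP
  have hsurj' : Function.Surjective (fun t : Fin c => (π ^ (t : ℕ)) x0) := by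
    intro y
    obtain ⟨t, ht⟩ := hsurj y
    refine ⟨⟨t % c, Nat.mod_lt _ hc⟩, ?_⟩
    simp only
    rw [← ht]
    conv_rhs => rw [← Nat.div_add_mod t c]
    rw [add_comm, pow_add, pow_mul, hpow, one_pow, mul_one]
  have hinj : Function.Injective (fun t : Fin c => (π ^ (t : ℕ)) x0) :=
    ((Fintype.bijective_iff_surjective_and_card _).2 ⟨hsurj', by simpa using hcdef⟩).1
  set q := P.charpoly - (X ^ c - 1) with hq
  have hdeg : q.degree < (c : WithBot ℕ) := by
    have h1 : P.charpoly.degree = (c : WithBot ℕ) := Matrix.charpoly_degree_eq_dim P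
    have h2 : (X ^ c - 1 : ℂ[X]).degree = (c : WithBot ℕ) := by
      simpa using degree_X_pow_sub_C hc (1 : ℂ)
    have h3 := Polynomial.degree_sub_lt (h1.trans h2.symm) (P.charpoly_monic.ne_zero)
      (by rw [P.charpoly_monic.leadingCoeff,
        (by simpa using monic_X_pow_sub_C (1 : ℂ) hc.ne' : (X ^ c - 1 : ℂ[X]).Monic).leadingCoeff])
    rwa [h1] at h3
  have hqdeg : q.natDegree < c := by
    rcases eq_or_ne q 0 with h0 | h0
    · simpa [h0] using hc
    · exact (Polynomial.natDegree_lt_iff_degree_lt h0).2 hdeg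
  have hPc : P ^ c = 1 := by rw [← permMatrix_pow', hpow, permMatrix_one']
  have hq0 : Polynomial.aeval P q = 0 := by
    rw [hq, map_sub, Matrix.aeval_self_charpoly, map_sub, map_pow, aeval_X, aeval_one, hPc,
      sub_self, sub_zero]
  have key : ∀ t : Fin c, q.coeff t = 0 := by
    intro t
    have e1 : (0 : Matrix α α ℂ) = ∑ i ∈ Finset.range c, q.coeff i • P ^ i := by
      rw [← Polynomial.aeval_eq_sum_range' hqdeg P, hq0]
    have e2 := congrFun (congrFun e1 x0) ((π ^ (t : ℕ)) x0)
    rw [Matrix.zero_apply, Matrix.sum_apply] at e2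
    have e3 : ∀ i ∈ Finset.range c,
        (q.coeff i • P ^ i) x0 ((π ^ (t : ℕ)) x0)
          = q.coeff i * (if (π ^ i) x0 = (π ^ (t : ℕ)) x0 then 1 else 0) := by
      intro i _
      rw [Matrix.smul_apply, hP, ← permMatrix_pow', permMatrix_apply', smul_eq_mul]
    rw [Finset.sum_congr rfl e3] at e2
    rw [Finset.sum_eq_single_of_mem (t : ℕ) (Finset.mem_range.2 t.2)] at e2
    · simpa using e2.symm
    · intro i hi hne
      rw [if_neg, mul_zero]
      intro hEq
      exact hne (congrArg Fin.val (hinj (a₁ := ⟨i, Finset.mem_range.1 hi⟩) (a₂ := t) hEq))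
  have hq00 : q = 0 := by
    apply Polynomial.ext
    intro t
    rcases lt_or_ge t c with ht | ht
    · simpa using key ⟨t, ht⟩
    · rw [Polynomial.coeff_eq_zero_of_natDegree_lt (lt_of_lt_of_le hqdeg ht), Polynomial.coeff_zero]
  have := sub_eq_zero.mp hq00
  exact this

end PermCharpoly

section Master
open Equiv
set_option linter.unusedSectionVars false
variable {n : Type*} [Fintype n] [DecidableEq n]

private lemma Xsub1_ne : (X - 1 : ℂ[X]) ≠ 0 := by
  simpa using Polynomial.X_sub_C_ne_zero (1 : ℂ)

private lemma card_mem_subtype (σ : Equiv.Perm n) :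
    Fintype.card {y // y ∈ σ.support} = σ.support.card := by
  simp [Fintype.card_subtype]
  rfl

private lemma card_not_mem_subtype (σ : Equiv.Perm n) :
    Fintype.card {y // ¬ y ∈ σ.support} = Fintype.card n - σ.support.card := by
  rw [Fintype.card_subtype_compl]
  congr 1
  simp [Fintype.card_subtype]
  rfl

private lemma charpoly_perm (σ : Equiv.Perm n) :
    (σ.permMatrix ℂ).charpoly * (X - 1) ^ σ.support.card
      = (X - 1) ^ Fintype.card n * (σ.cycleType.map fun c => X ^ c - 1).prod := by
  induction σ using Equiv.Perm.cycle_induction_on with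
  | base_one => simp [permMatrix_one', charpoly_one']
  | base_cycles σ hσ =>
    have h : ∀ x, (x ∈ σ.support) ↔ (σ x ∈ σ.support) :=
      fun x => (Equiv.Perm.apply_mem_support).symm
    replace h : ∀ x, (σ x ∈ σ.support) ↔ (x ∈ σ.support) := fun x => (h x).symm
    have hsplit := charpoly_stable σ (· ∈ σ.support) h
    have h2 : (σ.subtypePerm (fun x => not_congr (h x)) : Equiv.Perm {x // ¬ x ∈ σ.support}) = 1 := by
      ext x
      simp [Equiv.Perm.subtypePerm_apply, Equiv.Perm.notMem_support.mp x.2]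
    obtain ⟨x, hx1, hx2⟩ := id hσ
    have hx0 : x ∈ σ.support := Equiv.Perm.mem_support.2 hx1
    have hσpow : σ ^ Fintype.card {y // y ∈ σ.support} = 1 := by
      rw [card_mem_subtype, ← hσ.orderOf]; exact pow_orderOf_eq_one σ
    have hpow : (σ.subtypePerm h) ^ Fintype.card {y // y ∈ σ.support} = 1 := by
      ext y
      simp only [Equiv.Perm.subtypePerm_pow, Equiv.Perm.subtypePerm_apply, hσpow,
        Equiv.Perm.coe_one, id_eq, Subtype.coe_eta]
    have hsurj : ∀ y' : {y // y ∈ σ.support},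
        ∃ t : ℕ, ((σ.subtypePerm h) ^ t) ⟨x, hx0⟩ = y' := by
      rintro ⟨y, hy⟩
      obtain ⟨i, _, _, hi⟩ := (hx2 (Equiv.Perm.mem_support.1 hy)).exists_pow_eq σ
      refine ⟨i, ?_⟩
      rw [Equiv.Perm.subtypePerm_pow]
      exact Subtype.ext (by simpa [Equiv.Perm.subtypePerm_apply] using hi)
    have hcpos : 0 < Fintype.card {y // y ∈ σ.support} := Fintype.card_pos_iff.2 ⟨⟨x, hx0⟩⟩
    have htrans := charpoly_transitive (σ.subtypePerm h) ⟨x, hx0⟩ hsurj hpow hcpos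
    have hle : σ.support.card ≤ Fintype.card n := Finset.card_le_univ σ.support
    rw [hsplit, htrans, h2, permMatrix_one', charpoly_one', card_mem_subtype,
      card_not_mem_subtype, hσ.cycleType]
    rw [mul_assoc, ← pow_add, Nat.sub_add_cancel hle]
    simp [mul_comm]
  | induction_disjoint σ τ hd hσ ih1 ih2 =>
    have hfixτ : ∀ x ∈ σ.support, τ x = x := by
      intro x hx
      rcases hd x with h' | h'
      · exact absurd h' (Equiv.Perm.mem_support.1 hx)
      · exact h'
    have hstabτ : ∀ x, (x ∈ σ.support) ↔ (τ x ∈ σ.support) := by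
      intro x
      constructor
      · intro hx; rwa [hfixτ x hx]
      · intro hx
        by_contra hc
        rcases hd x with h' | h'
        · rcases hd (τ x) with h'' | h''
          · exact absurd h'' (Equiv.Perm.mem_support.1 hx)
          · exact hc (by rwa [← τ.injective h''])
        · rw [h'] at hx; exact hc hx
    have hstab : ∀ x, (x ∈ σ.support) ↔ ((σ * τ) x ∈ σ.support) := by
      intro x
      rw [hstabτ x, Equiv.Perm.mul_apply, ← Equiv.Perm.apply_mem_support (f := σ) (x := τ x)]
    have hsσ : ∀ x, (x ∈ σ.support) ↔ (σ x ∈ σ.support) :=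
      fun x => (Equiv.Perm.apply_mem_support).symm
    replace hstab : ∀ x, ((σ * τ) x ∈ σ.support) ↔ (x ∈ σ.support) := fun x => (hstab x).symm
    replace hsσ : ∀ x, (σ x ∈ σ.support) ↔ (x ∈ σ.support) := fun x => (hsσ x).symm
    replace hstabτ : ∀ x, (τ x ∈ σ.support) ↔ (x ∈ σ.support) := fun x => (hstabτ x).symm
    have hsplitστ := charpoly_stable (σ * τ) (· ∈ σ.support) hstab
    have hsplitσ := charpoly_stable σ (· ∈ σ.support) hsσ
    have hsplitτ := charpoly_stable τ (· ∈ σ.support) hstabτ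
    have e1 : ((σ * τ).subtypePerm hstab : Equiv.Perm {x // x ∈ σ.support})
        = σ.subtypePerm hsσ := by
      ext x
      simp [Equiv.Perm.subtypePerm_apply, Equiv.Perm.mul_apply, hfixτ x.1 x.2]
    have e2 : ((σ * τ).subtypePerm (fun x => not_congr (hstab x)) : Equiv.Perm {x // ¬ x ∈ σ.support})
        = τ.subtypePerm (fun x => not_congr (hstabτ x)) := by
      ext x
      have : σ (τ x.1) = τ x.1 := by
        rw [← Equiv.Perm.notMem_support]
        intro hmem
        exact x.2 ((hstabτ x.1).1 hmem)
      simp [Equiv.Perm.subtypePerm_apply, Equiv.Perm.mul_apply, this]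
    have e3 : (σ.subtypePerm (fun x => not_congr (hsσ x))
        : Equiv.Perm {x // ¬ x ∈ σ.support}) = 1 := by
      ext x
      simp [Equiv.Perm.subtypePerm_apply, Equiv.Perm.notMem_support.mp x.2]
    have e4 : (τ.subtypePerm hstabτ : Equiv.Perm {x // x ∈ σ.support}) = 1 := by
      ext x
      simp [Equiv.Perm.subtypePerm_apply, hfixτ x.1 x.2]
    have hle : σ.support.card ≤ Fintype.card n := Finset.card_le_univ σ.support
    have key : ((σ * τ).permMatrix ℂ).charpoly * (X - 1) ^ Fintype.card n
        = (σ.permMatrix ℂ).charpoly * (τ.permMatrix ℂ).charpoly := by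
      rw [hsplitστ, hsplitσ, hsplitτ, e1, e2, e3, e4, permMatrix_one', permMatrix_one',
        charpoly_one', charpoly_one', card_mem_subtype, card_not_mem_subtype]
      rw [show ((X : ℂ[X]) - 1) ^ Fintype.card n
          = (X - 1) ^ (Fintype.card n - σ.support.card) * (X - 1) ^ σ.support.card by
        rw [← pow_add, Nat.sub_add_cancel hle]]
      ring
    have hXne : ((X - 1 : ℂ[X]) ^ Fintype.card n) ≠ 0 := pow_ne_zero _ Xsub1_ne
    apply mul_left_cancel₀ hXne
    rw [hd.support_mul, Finset.card_union_of_disjoint hd.disjoint_support, hd.cycleType_mul]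
    calc (X - 1 : ℂ[X]) ^ Fintype.card n *
          (((σ * τ).permMatrix ℂ).charpoly * (X - 1) ^ (σ.support.card + τ.support.card))
        = (((σ * τ).permMatrix ℂ).charpoly * (X - 1) ^ Fintype.card n) *
            ((X - 1) ^ σ.support.card * (X - 1) ^ τ.support.card) := by ring
      _ = ((σ.permMatrix ℂ).charpoly * (X - 1) ^ σ.support.card) *
            ((τ.permMatrix ℂ).charpoly * (X - 1) ^ τ.support.card) := by rw [key]; ring
      _ = ((X - 1) ^ Fintype.card n * (σ.cycleType.map fun c => X ^ c - 1).prod) *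
            ((X - 1) ^ Fintype.card n * (τ.cycleType.map fun c => X ^ c - 1).prod) := by
              rw [ih1, ih2]
      _ = (X - 1) ^ Fintype.card n *
            ((X - 1) ^ Fintype.card n *
              ((σ.cycleType + τ.cycleType).map fun c => X ^ c - 1).prod) := by
              rw [Multiset.map_add, Multiset.prod_add]; ring

end Master

section Main
set_option linter.unusedSectionVars false
variable {n : Type*} [Fintype n] [DecidableEq n]

private lemma charpoly_conj (T : (Matrix n n ℂ)ˣ) (A : Matrix n n ℂ) :
    (T⁻¹.val * A * T.val).charpoly = A.charpoly := by
  let f : Matrix n n ℂ →+* Matrix n n ℂ[X] := (Polynomial.C : ℂ →+* ℂ[X]).mapMatrix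
  have hscalar : Commute (Matrix.scalar n (X : ℂ[X])) (f T.val) :=
    scalar_commute _ (fun r => Commute.all _ r) _
  have key : charmatrix (T⁻¹.val * A * T.val) = f T⁻¹.val * charmatrix A * f T.val := by
    simp only [charmatrix]
    rw [_root_.map_mul, _root_.map_mul, mul_sub, sub_mul]
    congr 1
    rw [mul_assoc, hscalar.eq, ← mul_assoc, ← _root_.map_mul, Units.inv_mul, _root_.map_one, one_mul]
  have hdet1 : (f T⁻¹.val).det * (f T.val).det = 1 := by
    rw [← det_mul, ← _root_.map_mul, Units.inv_mul, _root_.map_one, det_one]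
  rw [Matrix.charpoly, Matrix.charpoly, key, det_mul, det_mul]
  calc (f T⁻¹.val).det * (charmatrix A).det * (f T.val).det
      = (charmatrix A).det * ((f T⁻¹.val).det * (f T.val).det) := by ring
    _ = (charmatrix A).det := by rw [hdet1, mul_one]

private lemma rootMult_X_pow_sub_one {c : ℕ} (hc : c ≠ 0) (μ : ℂ) :
    rootMultiplicity μ ((X : ℂ[X]) ^ c - 1) = if μ ^ c = 1 then 1 else 0 := by
  classical
  have hmonic : ((X : ℂ[X]) ^ c - 1).Monic := by simpa using monic_X_pow_sub_C (1 : ℂ) hc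
  by_cases h : μ ^ c = 1
  · rw [if_pos h]
    apply le_antisymm
    · have hsep : ((X : ℂ[X]) ^ c - 1).Separable := by
        simpa using Polynomial.separable_X_pow_sub_C (1 : ℂ) (Nat.cast_ne_zero.2 hc) one_ne_zero
      calc rootMultiplicity μ ((X : ℂ[X]) ^ c - 1)
          = ((X : ℂ[X]) ^ c - 1).roots.count μ := (Polynomial.count_roots _).symm
        _ ≤ 1 := Polynomial.count_roots_le_one hsep μ
    · exact (Polynomial.rootMultiplicity_pos hmonic.ne_zero).2 (by simp [Polynomial.IsRoot, h])
  · rw [if_neg h]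
    exact Polynomial.rootMultiplicity_eq_zero (by simp [Polynomial.IsRoot, sub_eq_zero, h])

private lemma rootMult_mono (M : Multiset ℕ) (hM : ∀ c ∈ M, c ≠ 0) (ζ η : ℂ)
    (himp : ∀ c ∈ M, ζ ^ c = 1 → η ^ c = 1) :
    rootMultiplicity ζ (M.map fun c => (X : ℂ[X]) ^ c - 1).prod
      ≤ rootMultiplicity η (M.map fun c => (X : ℂ[X]) ^ c - 1).prod := by
  induction M using Multiset.induction_on with
  | empty =>
    rw [Polynomial.rootMultiplicity_eq_zero (by simp [Polynomial.IsRoot])]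
    exact Nat.zero_le _
  | cons a s ih =>
    have ha : a ≠ 0 := hM a (Multiset.mem_cons_self a s)
    have hs : ∀ c ∈ s, c ≠ 0 := fun c hc => hM c (Multiset.mem_cons_of_mem hc)
    have hne : ((s.map fun c => (X : ℂ[X]) ^ c - 1).prod) ≠ 0 := by
      apply Polynomial.Monic.ne_zero
      apply Polynomial.monic_multiset_prod_of_monic
      intro i hi
      simpa using monic_X_pow_sub_C (1 : ℂ) (hs i hi)
    have hfne : ((X : ℂ[X]) ^ a - 1) ≠ 0 :=
      (by simpa using monic_X_pow_sub_C (1 : ℂ) ha : ((X : ℂ[X]) ^ a - 1).Monic).ne_zero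
    rw [Multiset.map_cons, Multiset.prod_cons,
      Polynomial.rootMultiplicity_mul (mul_ne_zero hfne hne),
      Polynomial.rootMultiplicity_mul (mul_ne_zero hfne hne)]
    apply Nat.add_le_add
    · rw [rootMult_X_pow_sub_one ha, rootMult_X_pow_sub_one ha]
      by_cases h : ζ ^ a = 1
      · simp [h, himp a (Multiset.mem_cons_self a s) h]
      · simp only [if_neg h]
        exact Nat.zero_le _
    · exact ih hs (fun c hc h => himp c (Multiset.mem_cons_of_mem hc) h)

end Main

/-- A `d × d` complex matrix is a permutation matrix if it is the matrix of some
permutation of the standard basis. -/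
def IsPermMatrix {d : ℕ} (M : Matrix (Fin d) (Fin d) ℂ) : Prop :=
  ∃ σ : Equiv.Perm (Fin d), M = σ.permMatrix ℂ

/-- `A` is similar to a permutation matrix. -/
def IsSimilarToPermMatrix {d : ℕ} (A : Matrix (Fin d) (Fin d) ℂ) : Prop :=
  ∃ T : (Matrix (Fin d) (Fin d) ℂ)ˣ, IsPermMatrix (T⁻¹.val * A * T.val)

theorem cyclotomic_divisor_of_charpoly_descends
    (d : ℕ) (A : Matrix (Fin d) (Fin d) ℂ)
    (hA : IsSimilarToPermMatrix A)
    (m N : ℕ) (hm : 0 < m) (hN : 0 < N)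
    (hdvd : (cyclotomic N ℂ) ^ m ∣ A.charpoly) :
    ∀ k : ℕ, 0 < k → k ∣ N → (cyclotomic k ℂ) ^ m ∣ A.charpoly := by
  intro k hk hkN
  obtain ⟨T, σ, hTσ⟩ := hA
  have hchar : A.charpoly = (σ.permMatrix ℂ).charpoly := by
    rw [← charpoly_conj T A, hTσ]
  have hle : σ.support.card ≤ Fintype.card (Fin d) := Finset.card_le_univ σ.support
  set M : Multiset ℕ :=
    Multiset.replicate (Fintype.card (Fin d) - σ.support.card) 1 + σ.cycleType with hM
  have hpowsplit : ((X : ℂ[X]) - 1) ^ (Fintype.card (Fin d) - σ.support.card) *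
      (X - 1) ^ σ.support.card = (X - 1) ^ Fintype.card (Fin d) := by
    rw [← pow_add, Nat.sub_add_cancel hle]
  have hcancel : A.charpoly * (X - 1) ^ σ.support.card
      = ((M.map fun c => (X : ℂ[X]) ^ c - 1).prod) * (X - 1) ^ σ.support.card := by
    rw [hchar, charpoly_perm σ, hM, Multiset.map_add, Multiset.prod_add,
      Multiset.map_replicate, Multiset.prod_replicate, pow_one, ← hpowsplit]
    ring
  have hform : A.charpoly = (M.map fun c => (X : ℂ[X]) ^ c - 1).prod :=
    mul_right_cancel₀ (pow_ne_zero _ Xsub1_ne) hcancel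
  have hMpos : ∀ c ∈ M, c ≠ 0 := by
    intro c hc
    rw [hM, Multiset.mem_add] at hc
    rcases hc with hc | hc
    · rw [Multiset.eq_of_mem_replicate hc]
      exact one_ne_zero
    · have := Equiv.Perm.two_le_of_mem_cycleType hc
      omega
  have hpne : A.charpoly ≠ 0 := (Matrix.charpoly_monic A).ne_zero
  obtain ⟨ζ, hζ⟩ : ∃ ζ : ℂ, IsPrimitiveRoot ζ N :=
    ⟨_, Complex.isPrimitiveRoot_exp N hN.ne'⟩
  have hmζ : m ≤ rootMultiplicity ζ A.charpoly := by
    rw [Polynomial.le_rootMultiplicity_iff hpne]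
    refine dvd_trans (pow_dvd_pow_of_dvd ?_ m) hdvd
    rw [Polynomial.dvd_iff_isRoot]
    exact hζ.isRoot_cyclotomic hN
  have hk_root : ∀ η ∈ primitiveRoots k ℂ, ((X - C η) ^ m : ℂ[X]) ∣ A.charpoly := by
    intro η hη
    have hηprim : IsPrimitiveRoot η k := (mem_primitiveRoots hk).1 hη
    have himp : ∀ c ∈ M, ζ ^ c = 1 → η ^ c = 1 := by
      intro c hc h1
      exact (hηprim.pow_eq_one_iff_dvd c).2
        (dvd_trans hkN ((hζ.pow_eq_one_iff_dvd c).1 h1))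
    have hmono := rootMult_mono M hMpos ζ η himp
    rw [← hform] at hmono
    rw [← Polynomial.le_rootMultiplicity_iff hpne]
    exact le_trans hmζ hmono
  obtain ⟨ζk, hζk⟩ : ∃ z : ℂ, IsPrimitiveRoot z k :=
    ⟨_, Complex.isPrimitiveRoot_exp k hk.ne'⟩
  rw [cyclotomic_eq_prod_X_sub_primitiveRoots hζk, ← Finset.prod_pow]
  refine Finset.prod_dvd_of_coprime ?_ hk_root
  intro a ha b hb hab
  exact (Polynomial.isCoprime_X_sub_C_of_isUnit_sub
    (isUnit_iff_ne_zero.2 (sub_ne_zero.2 hab))).pow
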